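/- Let F be a field of characteristic p > 0 and a_1, ..., a_n ∈ F*. The quasi-Pfister form ⟨⟨a_1,...,a_n⟩⟩, defined as the form sending (x_{j_1,...,j_n}) ∈ F^{p^n} to Σ_{0 ≤ j_1,...,j_n ≤ p-1} (Π_i a_i^{j_i}) x_{j_1,...,j_n}^p, is anisotropic over F if and only if [F^p(a_1,...,a_n) : F^p] = p^n. -/

import Mathlib

set_option synthInstance.maxHeartbeats 1000000

/-- The quasi-Pfister form ⟨⟨a_1,...,a_n⟩⟩. -/
def pfisterForm (p : ℕ) {F : Type*} [Field F] {n : ℕ} (a : Fin n → F)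
    (x : (Fin n → Fin p) → F) : F :=
  ∑ j : Fin n → Fin p, (∏ i, a i ^ (j i : ℕ)) * x j ^ p

/-- The quasi-Pfister form ⟨⟨a_1,...,a_n⟩⟩ is anisotropic over F if and only if
[F^p(a_1,...,a_n) : F^p] = p^n. -/
theorem pfister_anisotropic_iff_degree
    {F : Type*} [Field F] (p n : ℕ) [Fact p.Prime] [CharP F p]
    (a : Fin n → F) (ha : ∀ i, a i ≠ 0) :
    (∀ x, pfisterForm p a x = 0 → x = 0) ↔
      Module.finrank ((frobenius F p).fieldRange)
        (IntermediateField.adjoin (↥((frobenius F p).fieldRange)) (Set.range a)) = p ^ n := by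
  have hp : p.Prime := Fact.out
  set K := (frobenius F p).fieldRange with hK
  set m : (Fin n → Fin p) → F := fun j => ∏ i, a i ^ (j i : ℕ) with hm
  have hpow : ∀ y : F, y ^ p ∈ K := fun y => ⟨y, rfl⟩
  have hsmul : ∀ (c : K) (y : F), c • y = (c : F) * y := fun c y => rfl
  -- Step A : anisotropy iff linear independence of the monomials over K
  have stepA : (∀ x, pfisterForm p a x = 0 → x = 0) ↔ LinearIndependent K m := by
    rw [Fintype.linearIndependent_iff]
    constructor
    · intro h g hg j
      choose x hx using fun j => RingHom.mem_fieldRange.mp (g j).2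
      have hx' : ∀ j, x j ^ p = (g j : F) := fun j => hx j
      have h0 : pfisterForm p a x = 0 := by
        rw [← hg]
        unfold pfisterForm
        refine Finset.sum_congr rfl fun j _ => ?_
        rw [hsmul, ← hx' j]
        ring
      have hxj : x j = 0 := congrFun (h x h0) j
      exact Subtype.ext (by rw [← hx' j, hxj, zero_pow hp.ne_zero]; simp)
    · intro h x hx
      funext j
      have hg : ∑ j, (⟨x j ^ p, hpow (x j)⟩ : K) • m j = 0 := by
        rw [← hx]
        unfold pfisterForm
        refine Finset.sum_congr rfl fun j _ => ?_
        rw [hsmul]; ring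
      have := h (fun j => ⟨x j ^ p, hpow (x j)⟩) hg j
      have hxp : x j ^ p = 0 := congrArg Subtype.val this
      exact pow_eq_zero_iff hp.ne_zero |>.mp hxp
  -- the monomials lie in the adjoined field
  have hL : ∀ i, a i ∈ IntermediateField.adjoin K (Set.range a) :=
    fun i => IntermediateField.subset_adjoin _ _ ⟨i, rfl⟩
  -- the span of the monomials is closed under multiplication and contains 1
  have h_one : (1 : F) ∈ Submodule.span K (Set.range m) := by
    have h1 : m (fun _ => ⟨0, hp.pos⟩) = 1 := by simp [hm]
    rw [← h1]; exact Submodule.subset_span ⟨_, rfl⟩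
  have hcore : ∀ j j', m j * m j' ∈ Submodule.span K (Set.range m) := by
    intro j j'
    set r : Fin n → Fin p := fun i => ⟨((j i : ℕ) + (j' i : ℕ)) % p, Nat.mod_lt _ hp.pos⟩ with hr
    have key : m j * m j' =
        (⟨(∏ i, a i ^ (((j i : ℕ) + (j' i : ℕ)) / p)) ^ p, hpow _⟩ : K) • m r := by
      rw [hsmul]
      show (∏ i, a i ^ (j i : ℕ)) * (∏ i, a i ^ (j' i : ℕ)) =
        (∏ i, a i ^ (((j i : ℕ) + (j' i : ℕ)) / p)) ^ p * ∏ i, a i ^ (r i : ℕ)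
      rw [← Finset.prod_mul_distrib, ← Finset.prod_pow, ← Finset.prod_mul_distrib]
      refine Finset.prod_congr rfl fun i _ => ?_
      rw [← pow_add, ← pow_mul, ← pow_add]
      congr 1
      show (j i : ℕ) + (j' i : ℕ) = (((j i : ℕ) + (j' i : ℕ)) / p) * p + ((j i : ℕ) + (j' i : ℕ)) % p
      rw [Nat.div_add_mod']
    rw [key]
    exact Submodule.smul_mem _ _ (Submodule.subset_span ⟨r, rfl⟩)
  have hmulmem : ∀ x y : F, x ∈ Submodule.span K (Set.range m) →
      y ∈ Submodule.span K (Set.range m) → x * y ∈ Submodule.span K (Set.range m) := by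
    have hle : Submodule.span K (Set.range m) * Submodule.span K (Set.range m) ≤
        Submodule.span K (Set.range m) := by
      rw [Submodule.span_mul_span, Submodule.span_le]
      rintro z hz
      rw [Set.mem_mul] at hz
      obtain ⟨x, ⟨j, rfl⟩, y, ⟨j', rfl⟩, rfl⟩ := hz
      exact hcore j j'
    exact fun x y hx hy => hle (Submodule.mul_mem_mul hx hy)
  -- the a i are in the span
  have haS : ∀ i, a i ∈ Submodule.span K (Set.range m) := by
    intro i
    have h1 : m (fun k => if k = i then ⟨1, hp.one_lt⟩ else ⟨0, hp.pos⟩) = a i := by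
      rw [hm]
      simp only
      rw [Finset.prod_eq_single i]
      · simp
      · intro k _ hk; simp [hk]
      · simp
    rw [← h1]; exact Submodule.subset_span ⟨_, rfl⟩
  -- algebraicity of the a i over K
  have halg : ∀ x ∈ Set.range a, IsAlgebraic K x := by
    rintro _ ⟨i, rfl⟩
    refine ⟨Polynomial.X ^ p - Polynomial.C ⟨a i ^ p, hpow _⟩,
      Polynomial.X_pow_sub_C_ne_zero hp.pos _, ?_⟩
    have hcoe : ∀ c : K, algebraMap K F c = (c : F) := fun c => rfl
    simp [map_sub, map_pow, Polynomial.aeval_X, Polynomial.aeval_C, hcoe]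
  have hLS : (IntermediateField.adjoin K (Set.range a)).toSubalgebra
      = Algebra.adjoin K (Set.range a) :=
    IntermediateField.adjoin_toSubalgebra_of_isAlgebraic halg
  have hAS : Algebra.adjoin K (Set.range a) ≤
      Submodule.toSubalgebra (Submodule.span K (Set.range m)) h_one hmulmem :=
    Algebra.adjoin_le (by rintro _ ⟨i, rfl⟩; exact haS i)
  have hspan : Submodule.span K (Set.range m)
      = Subalgebra.toSubmodule (IntermediateField.adjoin K (Set.range a)).toSubalgebra := by
    apply le_antisymm
    · rw [Submodule.span_le]
      rintro _ ⟨j, rfl⟩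
      show m j ∈ IntermediateField.adjoin K (Set.range a)
      exact prod_mem fun i _ => pow_mem (hL i) _
    · rw [hLS]
      exact hAS
  rw [stepA, linearIndependent_iff_card_eq_finrank_span]
  rw [show (Set.range m).finrank K = Module.finrank K (Submodule.span K (Set.range m)) from rfl]
  rw [hspan, Fintype.card_fun, Fintype.card_fin, Fintype.card_fin]
  exact eq_comm
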